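/- For every integer k ≥ 3, let P = P(k) be the k×k cyclic permutation matrix with P_{i,i−1} = 1 (indices mod k), and let J, I be the k×k all-ones and identity matrices. Then the 2k×2k block matrix M = [[J−I, J−I−P],[J−I−P⁻¹, J−I−P⁻¹−P]] is invertible with inverse M⁻¹ = [[−(J−I−P⁻¹−P), J−I−P],[J−I−P⁻¹, −(J−I)]]. -/
import Mathlib

/-- The cyclic permutation matrix `P(k)` with `P_{i,i-1} = 1` (indices mod `k`). -/
def cycPerm (k : ℕ) : Matrix (ZMod k) (ZMod k) ℝ :=
  Matrix.of fun i j => if j = i - 1 then 1 else 0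

/-- The inverse cyclic permutation matrix with entries `P⁻¹_{i,i+1} = 1` (indices mod `k`). -/
def cycPermInv (k : ℕ) : Matrix (ZMod k) (ZMod k) ℝ :=
  Matrix.of fun i j => if j = i + 1 then 1 else 0

/-- The all-ones matrix `J`. -/
def allOnes (k : ℕ) : Matrix (ZMod k) (ZMod k) ℝ := Matrix.of fun _ _ => 1

lemma cycPerm_mul_cycPermInv (k : ℕ) [NeZero k] : cycPerm k * cycPermInv k = 1 := by
  ext i j
  rw [Matrix.mul_apply, Finset.sum_eq_single (i - 1)]
  · simp [cycPerm, cycPermInv, Matrix.one_apply, sub_add_cancel, eq_comm]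
  · intro b _ hb; simp [cycPerm, hb]
  · simp

lemma cycPermInv_mul_cycPerm (k : ℕ) [NeZero k] : cycPermInv k * cycPerm k = 1 := by
  ext i j
  rw [Matrix.mul_apply, Finset.sum_eq_single (i + 1)]
  · simp [cycPerm, cycPermInv, Matrix.one_apply, add_sub_cancel_right, eq_comm]
  · intro b _ hb; simp [cycPermInv, hb]
  · simp

lemma allOnes_mul_cycPerm (k : ℕ) [NeZero k] : allOnes k * cycPerm k = allOnes k := by
  ext i j
  simp [cycPerm, allOnes, Matrix.mul_apply, eq_sub_iff_add_eq, Finset.filter_eq,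
    Finset.filter_eq']

lemma cycPerm_mul_allOnes (k : ℕ) [NeZero k] : cycPerm k * allOnes k = allOnes k := by
  ext i j
  simp [cycPerm, allOnes, Matrix.mul_apply]

lemma allOnes_mul_cycPermInv (k : ℕ) [NeZero k] : allOnes k * cycPermInv k = allOnes k := by
  ext i j
  have h : (Finset.filter (fun x => j = x + 1) Finset.univ) = {j - 1} := by
    ext x; simp [eq_sub_iff_add_eq, eq_comm]
  simp [cycPermInv, allOnes, Matrix.mul_apply, h]

lemma cycPermInv_mul_allOnes (k : ℕ) [NeZero k] : cycPermInv k * allOnes k = allOnes k := by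
  ext i j
  simp [cycPermInv, allOnes, Matrix.mul_apply]

/-- Abstract ring computation behind the block inverse. -/
lemma ring_blocks {R : Type*} [Ring R] (j p q : R)
    (h1 : j * p = j) (h2 : p * j = j) (h3 : j * q = j) (h4 : q * j = j)
    (h5 : p * q = 1) (h6 : q * p = 1) :
    ((j-1) * (-(j-1-q-p)) + (j-1-p) * (j-1-q) = 1) ∧
    ((j-1) * (j-1-p) + (j-1-p) * (-(j-1)) = 0) ∧
    ((j-1-q) * (-(j-1-q-p)) + (j-1-q-p) * (j-1-q) = 0) ∧
    ((j-1-q) * (j-1-p) + (j-1-q-p) * (-(j-1)) = 1) ∧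
    ((-(j-1-q-p)) * (j-1) + (j-1-p) * (j-1-q) = 1) ∧
    ((-(j-1-q-p)) * (j-1-p) + (j-1-p) * (j-1-q-p) = 0) ∧
    ((j-1-q) * (j-1) + (-(j-1)) * (j-1-q) = 0) ∧
    ((j-1-q) * (j-1-p) + (-(j-1)) * (j-1-q-p) = 1) := by
  refine ⟨?_, ?_, ?_, ?_, ?_, ?_, ?_, ?_⟩ <;>
    · simp only [mul_sub, sub_mul, mul_neg, neg_mul, neg_sub, mul_one, one_mul,
        h1, h2, h3, h4, h5, h6]
      abel

/-- For `k ≥ 3`, the block matrix `[[J−I, J−I−P],[J−I−P⁻¹, J−I−P⁻¹−P]]` is invertible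
with inverse `[[−(J−I−P⁻¹−P), J−I−P],[J−I−P⁻¹, −(J−I)]]`. -/
theorem stmt_18 (k : ℕ) (hk : 3 ≤ k) [NeZero k] :
    Matrix.fromBlocks (allOnes k - 1) (allOnes k - 1 - cycPerm k)
        (allOnes k - 1 - cycPermInv k) (allOnes k - 1 - cycPermInv k - cycPerm k) *
      Matrix.fromBlocks (-(allOnes k - 1 - cycPermInv k - cycPerm k)) (allOnes k - 1 - cycPerm k)
        (allOnes k - 1 - cycPermInv k) (-(allOnes k - 1)) = 1 ∧
    Matrix.fromBlocks (-(allOnes k - 1 - cycPermInv k - cycPerm k)) (allOnes k - 1 - cycPerm k)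
        (allOnes k - 1 - cycPermInv k) (-(allOnes k - 1)) *
      Matrix.fromBlocks (allOnes k - 1) (allOnes k - 1 - cycPerm k)
        (allOnes k - 1 - cycPermInv k) (allOnes k - 1 - cycPermInv k - cycPerm k) = 1 := by
  obtain ⟨e1, e2, e3, e4, e5, e6, e7, e8⟩ :=
    ring_blocks (allOnes k) (cycPerm k) (cycPermInv k)
      (allOnes_mul_cycPerm k) (cycPerm_mul_allOnes k)
      (allOnes_mul_cycPermInv k) (cycPermInv_mul_allOnes k)
      (cycPerm_mul_cycPermInv k) (cycPermInv_mul_cycPerm k)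
  constructor
  · rw [Matrix.fromBlocks_multiply, e1, e2, e3, e4, Matrix.fromBlocks_one]
  · rw [Matrix.fromBlocks_multiply, e5, e6, e7, e8, Matrix.fromBlocks_one]
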